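/- arXiv:2105.05725 — 5 statements merged into one kernel-verified Lean document; each statement's English description precedes it below -/
import Mathlib

section
/- For perfect matchings, coalitional exchange-stability implies Pareto-optimality: if M is a perfect coalitional exchange-stable matching of a preference profile, then there is no perfect matching M' such that every agent weakly prefers M'(x) to M(x) (or has M'(x)=M(x)) and at least one agent strictly prefers M'(x) to M(x). -/
/-- For perfect matchings, coalitional exchange-stability implies
Pareto-optimality. -/
theorem stmt_7 {V : Type*} [Fintype V]
    (pref : V → V → V → Prop)
    (hirr : ∀ i a, ¬ pref i a a)
    (M : V → V)
    (hinv : ∀ v, M (M v) = v)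
    (hperf : ∀ v, M v ≠ v)
    (hcoal : ¬ ∃ (r : ℕ) (x : ℕ → V), 2 ≤ r ∧ Set.InjOn x (Set.Iio r) ∧
        ∀ i < r, pref (x i) (M (x ((i + 1) % r))) (M (x i))) :
    ¬ ∃ M' : V → V, (∀ v, M' (M' v) = v) ∧ (∀ v, M' v ≠ v) ∧
        (∀ v, pref v (M' v) (M v) ∨ M' v = M v) ∧ (∃ v, pref v (M' v) (M v)) := by
  rintro ⟨M', hinv', hperf', hweak, v0, hv0⟩
  apply hcoal
  set σ : V → V := fun v => M (M' v) with hσ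
  have hσinj : Function.Injective σ := by
    intro a b hab
    have h1 : M' a = M' b := by
      have := congrArg M hab
      simpa [hσ, hinv] using this
    have := congrArg M' h1
    simpa [hinv'] using this
  set x : ℕ → V := fun i => σ^[i] v0 with hx
  -- strictness propagates along the orbit
  have hstrict : ∀ i, pref (x i) (M' (x i)) (M (x i)) ∧ M' (x i) ≠ M (x i) := by
    intro i
    induction i with
    | zero =>
      refine ⟨hv0, ?_⟩
      intro h
      exact hirr v0 (M v0) (h ▸ hv0)
    | succ n ih =>
      have hxs : x (n+1) = σ (x n) := by
        simp [hx, Function.iterate_succ_apply']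
      have hne : M' (x (n+1)) ≠ M (x (n+1)) := by
        intro h
        have hM : M (x (n+1)) = M' (x n) := by
          simp [hxs, hσ, hinv]
        have h1 : M' (x (n+1)) = M' (x n) := h.trans hM
        have h2 : x (n+1) = x n := by
          have := congrArg M' h1
          simpa [hinv'] using this
        have : σ (x n) = x n := hxs ▸ h2
        have hMM : M' (x n) = M (x n) := by
          have := congrArg M this
          simpa [hσ, hinv] using this
        exact ih.2 hMM
      refine ⟨?_, hne⟩
      rcases hweak (x (n+1)) with h | h
      · exact h
      · exact absurd h hne
  have hσ0 : σ v0 ≠ v0 := by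
    intro h
    have : M' v0 = M v0 := by
      have := congrArg M h
      simpa [hσ, hinv] using this
    exact (hstrict 0).2 (by simpa [hx] using this)
  -- existence of a period
  have hex : ∃ n, 0 < n ∧ σ^[n] v0 = v0 := by
    have : ¬ Function.Injective (fun n : Fin (Fintype.card V + 1) => σ^[(n : ℕ)] v0) := by
      intro hinj
      have := Fintype.card_le_of_injective _ hinj
      simp at this
    rw [Function.not_injective_iff] at this
    obtain ⟨a, b, hab, hne⟩ := this
    rcases lt_or_gt_of_ne (fun h => hne (by exact_mod_cast h)) with h | h
    · refine ⟨(b : ℕ) - a, by omega, ?_⟩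
      have : σ^[(a : ℕ)] (σ^[(b : ℕ) - a] v0) = σ^[(a : ℕ)] v0 := by
        rw [← Function.iterate_add_apply]
        have : (a : ℕ) + ((b : ℕ) - a) = b := by omega
        rw [this, hab]
      exact (hσinj.iterate (a : ℕ)) this
    · refine ⟨(a : ℕ) - b, by omega, ?_⟩
      have : σ^[(b : ℕ)] (σ^[(a : ℕ) - b] v0) = σ^[(b : ℕ)] v0 := by
        rw [← Function.iterate_add_apply]
        have : (b : ℕ) + ((a : ℕ) - b) = a := by omega
        rw [this, ← hab]
      exact (hσinj.iterate (b : ℕ)) this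
  classical
  set r := Nat.find hex with hr
  obtain ⟨hrpos, hrper⟩ : 0 < r ∧ σ^[r] v0 = v0 := Nat.find_spec hex
  have hr2 : 2 ≤ r := by
    rcases Nat.lt_or_ge r 2 with h | h
    · interval_cases r
      · simp at hrper; exact absurd hrper hσ0
    · exact h
  refine ⟨r, x, hr2, ?_, ?_⟩
  · -- injectivity on Iio r
    intro i hi j hj hij
    by_contra hne
    rcases lt_or_gt_of_ne hne with h | h
    · have : σ^[j - i] v0 = v0 := by
        apply hσinj.iterate i
        rw [← Function.iterate_add_apply]
        have : i + (j - i) = j := by omega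
        rw [this]
        exact hij.symm
      simp only [Set.mem_Iio] at hi hj
      exact Nat.find_min hex (by omega : j - i < r) ⟨by omega, this⟩
    · have : σ^[i - j] v0 = v0 := by
        apply hσinj.iterate j
        rw [← Function.iterate_add_apply]
        have : j + (i - j) = i := by omega
        rw [this]
        exact hij
      simp only [Set.mem_Iio] at hi hj
      exact Nat.find_min hex (by omega : i - j < r) ⟨by omega, this⟩
  · intro i hi
    have hnext : x ((i + 1) % r) = σ (x i) := by
      rcases Nat.lt_or_ge (i + 1) r with h | h
      · rw [Nat.mod_eq_of_lt h]
        simp [hx, Function.iterate_succ_apply']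
      · have hir : i + 1 = r := by omega
        rw [hir, Nat.mod_self]
        have : σ (x i) = σ^[i + 1] v0 := by
          simp [hx, Function.iterate_succ_apply']
        rw [this, hir, hrper]
        simp [hx]
    rw [hnext]
    have : M (σ (x i)) = M' (x i) := by simp [hσ, hinv]
    rw [this]
    exact (hstrict i).1
end

section
/- In the switch gadget, if a perfect matching M contains N^1 = {{α,b^0},{a^6,δ}} ∪ {{a^{z-1},b^z} : 1 ≤ z ≤ 6}, then every exchange-blocking coalition of M that involves some agent from A = {a^0,...,a^6} also involves α, and every exchange-blocking coalition involving some agent from B = {b^0,...,b^6} also involves δ. -/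
/-- `prefListSG acc pref i l` says that agent `i`'s acceptable agents are exactly
the members of `l` and `i`'s strict preference over them is given by the order
of `l` (earlier = preferred). -/
def prefListSG {V : Type*} [DecidableEq V] (acc : V → V → Prop) (pref : V → V → V → Prop)
    (i : V) (l : List V) : Prop :=
  (∀ v, acc i v ↔ v ∈ l) ∧
  (∀ p q, pref i p q ↔ p ∈ l ∧ q ∈ l ∧ l.idxOf p < l.idxOf q)

section Helpers

variable {V : Type*} [DecidableEq V] {acc : V → V → Prop} {pref : V → V → V → Prop}
  {u x p q s t : V}

lemma pref3_fst (h : prefListSG acc pref u [p,q,s]) (hx : pref u x p) : False := by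
  obtain ⟨hm, -, hlt⟩ := (h.2 x p).mp hx
  simp [List.idxOf_cons_self] at hlt

lemma pref3_snd (h : prefListSG acc pref u [p,q,s]) (hpq : p ≠ q) (hps : p ≠ s) (hqs : q ≠ s)
    (hx : pref u x q) : x = p := by
  obtain ⟨hm, -, hlt⟩ := (h.2 x q).mp hx
  simp only [List.mem_cons, List.not_mem_nil, or_false] at hm
  rcases hm with h1 | h1 | h1 <;> subst h1
  · rfl
  · omega
  · simp [List.idxOf_cons_ne _ hpq, List.idxOf_cons_ne _ hps,
      List.idxOf_cons_ne _ hqs, List.idxOf_cons_self] at hlt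

lemma pref3_trd (h : prefListSG acc pref u [p,q,s]) (hps : p ≠ s) (hqs : q ≠ s)
    (hx : pref u x s) : x = p ∨ x = q := by
  obtain ⟨hm, -, hlt⟩ := (h.2 x s).mp hx
  simp only [List.mem_cons, List.not_mem_nil, or_false] at hm
  rcases hm with h1 | h1 | h1 <;> subst h1
  · exact Or.inl rfl
  · exact Or.inr rfl
  · omega

lemma pref2_fst (h : prefListSG acc pref u [p,t]) (hx : pref u x p) : False := by
  obtain ⟨hm, -, hlt⟩ := (h.2 x p).mp hx
  simp [List.idxOf_cons_self] at hlt

lemma pref2_snd (h : prefListSG acc pref u [p,t]) (hpt : p ≠ t) (hx : pref u x t) : x = p := by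
  obtain ⟨hm, -, hlt⟩ := (h.2 x t).mp hx
  simp only [List.mem_cons, List.not_mem_nil, or_false] at hm
  rcases hm with h1 | h1 <;> subst h1
  · rfl
  · omega

end Helpers

/-- if a perfect matching M contains N¹, every exchange-blocking coalition of M involving an agent from A also involves α, and every one involving an agent from B also involves δ. -/
theorem stmt_9 {V : Type*} [DecidableEq V]
    (acc : V → V → Prop) (pref : V → V → V → Prop)
    (a b : Fin 7 → V) (al be ga de : V)
    (hnd : ([a 0, a 1, a 2, a 3, a 4, a 5, a 6, b 0, b 1, b 2, b 3, b 4, b 5, b 6,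
             al, be, ga, de] : List V).Nodup)
    (haccSym : ∀ p q, acc p q → acc q p)
    (ha0 : prefListSG acc pref (a 0) [b 1, be])
    (ha1 : prefListSG acc pref (a 1) [b 0, b 2, b 1])
    (ha2 : prefListSG acc pref (a 2) [b 3, b 1, b 2])
    (ha3 : prefListSG acc pref (a 3) [b 2, b 3, b 4])
    (ha4 : prefListSG acc pref (a 4) [b 4, b 3, b 5])
    (ha5 : prefListSG acc pref (a 5) [b 6, b 4, b 5])
    (ha6 : prefListSG acc pref (a 6) [b 5, de])
    (hb0 : prefListSG acc pref (b 0) [a 1, al])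
    (hb1 : prefListSG acc pref (b 1) [a 0, a 2, a 1])
    (hb2 : prefListSG acc pref (b 2) [a 2, a 3, a 1])
    (hb3 : prefListSG acc pref (b 3) [a 4, a 3, a 2])
    (hb4 : prefListSG acc pref (b 4) [a 3, a 5, a 4])
    (hb5 : prefListSG acc pref (b 5) [a 6, a 4, a 5])
    (hb6 : prefListSG acc pref (b 6) [a 5, ga])
    (M : V → V)
    (hinv : ∀ v, M (M v) = v)
    (hperf : ∀ v, M v ≠ v)
    (hMacc : ∀ v, acc v (M v))
    (hN1 : M al = b 0 ∧ M (a 6) = de ∧ M (a 0) = b 1 ∧ M (a 1) = b 2 ∧ M (a 2) = b 3 ∧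
       M (a 3) = b 4 ∧ M (a 4) = b 5 ∧ M (a 5) = b 6)
    (r : ℕ) (hr : 2 ≤ r) (ρ : ℕ → V)
    (hρinj : Set.InjOn ρ (Set.Iio r))
    (hebc : ∀ i < r, pref (ρ i) (M (ρ ((i + 1) % r))) (M (ρ i))) :
    ((∃ i < r, ∃ z : Fin 7, ρ i = a z) → ∃ i < r, ρ i = al) ∧
    ((∃ i < r, ∃ z : Fin 7, ρ i = b z) → ∃ i < r, ρ i = de) := by
  obtain ⟨hMal, hM6, hM0, hM1, hM2, hM3, hM4, hM5⟩ := hN1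
  have key : ∀ (i j : ℕ) (hi : i < 18) (hj : j < 18), i ≠ j →
      ([a 0, a 1, a 2, a 3, a 4, a 5, a 6, b 0, b 1, b 2, b 3, b 4, b 5, b 6,
        al, be, ga, de] : List V)[i] ≠
      ([a 0, a 1, a 2, a 3, a 4, a 5, a 6, b 0, b 1, b 2, b 3, b 4, b 5, b 6,
        al, be, ga, de] : List V)[j] := by
    intro i j hi hj hij he
    exact hij ((hnd.getElem_inj_iff).mp he)
  -- distinctness facts
  have hb0b2 : b 0 ≠ b 2 := key 7 9 (by norm_num) (by norm_num) (by norm_num)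
  have hb0b1 : b 0 ≠ b 1 := key 7 8 (by norm_num) (by norm_num) (by norm_num)
  have hb2b1 : b 2 ≠ b 1 := key 9 8 (by norm_num) (by norm_num) (by norm_num)
  have hb2b4 : b 2 ≠ b 4 := key 9 11 (by norm_num) (by norm_num) (by norm_num)
  have hb3b4 : b 3 ≠ b 4 := key 10 11 (by norm_num) (by norm_num) (by norm_num)
  have hb4b5 : b 4 ≠ b 5 := key 11 12 (by norm_num) (by norm_num) (by norm_num)
  have hb3b5 : b 3 ≠ b 5 := key 10 12 (by norm_num) (by norm_num) (by norm_num)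
  have hb5de : b 5 ≠ de := key 12 17 (by norm_num) (by norm_num) (by norm_num)
  have ha1al : a 1 ≠ al := key 1 14 (by norm_num) (by norm_num) (by norm_num)
  have ha2a1 : a 2 ≠ a 1 := key 2 1 (by norm_num) (by norm_num) (by norm_num)
  have ha3a1 : a 3 ≠ a 1 := key 3 1 (by norm_num) (by norm_num) (by norm_num)
  have ha4a2 : a 4 ≠ a 2 := key 4 2 (by norm_num) (by norm_num) (by norm_num)
  have ha3a2 : a 3 ≠ a 2 := key 3 2 (by norm_num) (by norm_num) (by norm_num)
  have ha6a4 : a 6 ≠ a 4 := key 6 4 (by norm_num) (by norm_num) (by norm_num)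
  have ha6a5 : a 6 ≠ a 5 := key 6 5 (by norm_num) (by norm_num) (by norm_num)
  have ha4a5 : a 4 ≠ a 5 := key 4 5 (by norm_num) (by norm_num) (by norm_num)
  -- matches of the b-side
  have mb0 : M (b 0) = al := by rw [← hMal, hinv]
  have mb1 : M (b 1) = a 0 := by rw [← hM0, hinv]
  have mb2 : M (b 2) = a 1 := by rw [← hM1, hinv]
  have mb3 : M (b 3) = a 2 := by rw [← hM2, hinv]
  have mb4 : M (b 4) = a 3 := by rw [← hM3, hinv]
  have mb5 : M (b 5) = a 4 := by rw [← hM4, hinv]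
  have mb6 : M (b 6) = a 5 := by rw [← hM5, hinv]
  have hjlt : ∀ i : ℕ, (i + 1) % r < r := fun i => Nat.mod_lt _ (by omega)
  -- dead ends on the A side
  have deadA0 : ∀ i < r, ρ i ≠ a 0 := by
    intro i hi h
    have he := hebc i hi; rw [h, hM0] at he
    exact pref2_fst ha0 he
  have deadA2 : ∀ i < r, ρ i ≠ a 2 := by
    intro i hi h
    have he := hebc i hi; rw [h, hM2] at he
    exact pref3_fst ha2 he
  have deadA5 : ∀ i < r, ρ i ≠ a 5 := by
    intro i hi h
    have he := hebc i hi; rw [h, hM5] at he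
    exact pref3_fst ha5 he
  -- A-side chain
  have stepA1 : ∀ i < r, ρ i = a 1 → ∃ k < r, ρ k = al := by
    intro i hi h
    have he := hebc i hi; rw [h, hM1] at he
    have hx := pref3_snd ha1 hb0b2 hb0b1 hb2b1 he
    refine ⟨(i + 1) % r, hjlt i, ?_⟩
    rw [← hinv (ρ ((i + 1) % r)), hx, mb0]
  have stepA3 : ∀ i < r, ρ i = a 3 → ∃ k < r, ρ k = al := by
    intro i hi h
    have he := hebc i hi; rw [h, hM3] at he
    rcases pref3_trd ha3 hb2b4 hb3b4 he with hx | hx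
    · exact stepA1 _ (hjlt i) (by rw [← hinv (ρ ((i + 1) % r)), hx, mb2])
    · exact absurd (by rw [← hinv (ρ ((i + 1) % r)), hx, mb3]) (deadA2 _ (hjlt i))
  have stepA4 : ∀ i < r, ρ i = a 4 → ∃ k < r, ρ k = al := by
    intro i hi h
    have he := hebc i hi; rw [h, hM4] at he
    rcases pref3_trd ha4 hb4b5 hb3b5 he with hx | hx
    · exact stepA3 _ (hjlt i) (by rw [← hinv (ρ ((i + 1) % r)), hx, mb4])
    · exact absurd (by rw [← hinv (ρ ((i + 1) % r)), hx, mb3]) (deadA2 _ (hjlt i))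
  have stepA6 : ∀ i < r, ρ i = a 6 → ∃ k < r, ρ k = al := by
    intro i hi h
    have he := hebc i hi; rw [h, hM6] at he
    have hx := pref2_snd ha6 hb5de he
    exact stepA4 _ (hjlt i) (by rw [← hinv (ρ ((i + 1) % r)), hx, mb5])
  -- dead ends on the B side
  have deadB1 : ∀ i < r, ρ i ≠ b 1 := by
    intro i hi h
    have he := hebc i hi; rw [h, mb1] at he
    exact pref3_fst hb1 he
  have deadB4 : ∀ i < r, ρ i ≠ b 4 := by
    intro i hi h
    have he := hebc i hi; rw [h, mb4] at he
    exact pref3_fst hb4 he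
  have deadB6 : ∀ i < r, ρ i ≠ b 6 := by
    intro i hi h
    have he := hebc i hi; rw [h, mb6] at he
    exact pref2_fst hb6 he
  -- B-side chain
  have stepB5 : ∀ i < r, ρ i = b 5 → ∃ k < r, ρ k = de := by
    intro i hi h
    have he := hebc i hi; rw [h, mb5] at he
    have hx := pref3_snd hb5 ha6a4 ha6a5 ha4a5 he
    refine ⟨(i + 1) % r, hjlt i, ?_⟩
    rw [← hinv (ρ ((i + 1) % r)), hx, hM6]
  have stepB3 : ∀ i < r, ρ i = b 3 → ∃ k < r, ρ k = de := by
    intro i hi h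
    have he := hebc i hi; rw [h, mb3] at he
    rcases pref3_trd hb3 ha4a2 ha3a2 he with hx | hx
    · exact stepB5 _ (hjlt i) (by rw [← hinv (ρ ((i + 1) % r)), hx, hM4])
    · exact absurd (by rw [← hinv (ρ ((i + 1) % r)), hx, hM3]) (deadB4 _ (hjlt i))
  have stepB2 : ∀ i < r, ρ i = b 2 → ∃ k < r, ρ k = de := by
    intro i hi h
    have he := hebc i hi; rw [h, mb2] at he
    rcases pref3_trd hb2 ha2a1 ha3a1 he with hx | hx
    · exact stepB3 _ (hjlt i) (by rw [← hinv (ρ ((i + 1) % r)), hx, hM2])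
    · exact absurd (by rw [← hinv (ρ ((i + 1) % r)), hx, hM3]) (deadB4 _ (hjlt i))
  have stepB0 : ∀ i < r, ρ i = b 0 → ∃ k < r, ρ k = de := by
    intro i hi h
    have he := hebc i hi; rw [h, mb0] at he
    have hx := pref2_snd hb0 ha1al he
    exact stepB2 _ (hjlt i) (by rw [← hinv (ρ ((i + 1) % r)), hx, hM1])
  constructor
  · rintro ⟨i, hi, z, h⟩
    fin_cases z
    · exact absurd h (deadA0 i hi)
    · exact stepA1 i hi h
    · exact absurd h (deadA2 i hi)
    · exact stepA3 i hi h
    · exact stepA4 i hi h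
    · exact absurd h (deadA5 i hi)
    · exact stepA6 i hi h
  · rintro ⟨i, hi, z, h⟩
    fin_cases z
    · exact stepB0 i hi h
    · exact absurd h (deadB1 i hi)
    · exact stepB2 i hi h
    · exact stepB3 i hi h
    · exact absurd h (deadB4 i hi)
    · exact stepB5 i hi h
    · exact absurd h (deadB6 i hi)
end

section
/- In the switch gadget, if a perfect matching M contains N^2 = {{a^0,β},{γ,b^6}} ∪ {{a^z,b^{z-1}} : 1 ≤ z ≤ 6}, then every exchange-blocking coalition of M that involves some agent from A = {a^0,...,a^6} also involves γ, and every exchange-blocking coalition involving some agent from B = {b^0,...,b^6} also involves β. -/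
/-- if a perfect matching M contains N², every exchange-blocking coalition of M involving an agent from A also involves γ, and every one involving an agent from B also involves β. -/
theorem stmt_10 {V : Type*} [DecidableEq V]
    (acc : V → V → Prop) (pref : V → V → V → Prop)
    (a b : Fin 7 → V) (al be ga de : V)
    (hnd : ([a 0, a 1, a 2, a 3, a 4, a 5, a 6, b 0, b 1, b 2, b 3, b 4, b 5, b 6,
             al, be, ga, de] : List V).Nodup)
    (haccSym : ∀ p q, acc p q → acc q p)
    (ha0 : prefListSG acc pref (a 0) [b 1, be])
    (ha1 : prefListSG acc pref (a 1) [b 0, b 2, b 1])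
    (ha2 : prefListSG acc pref (a 2) [b 3, b 1, b 2])
    (ha3 : prefListSG acc pref (a 3) [b 2, b 3, b 4])
    (ha4 : prefListSG acc pref (a 4) [b 4, b 3, b 5])
    (ha5 : prefListSG acc pref (a 5) [b 6, b 4, b 5])
    (ha6 : prefListSG acc pref (a 6) [b 5, de])
    (hb0 : prefListSG acc pref (b 0) [a 1, al])
    (hb1 : prefListSG acc pref (b 1) [a 0, a 2, a 1])
    (hb2 : prefListSG acc pref (b 2) [a 2, a 3, a 1])
    (hb3 : prefListSG acc pref (b 3) [a 4, a 3, a 2])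
    (hb4 : prefListSG acc pref (b 4) [a 3, a 5, a 4])
    (hb5 : prefListSG acc pref (b 5) [a 6, a 4, a 5])
    (hb6 : prefListSG acc pref (b 6) [a 5, ga])
    (M : V → V)
    (hinv : ∀ v, M (M v) = v)
    (hperf : ∀ v, M v ≠ v)
    (hMacc : ∀ v, acc v (M v))
    (hN2 : M (a 0) = be ∧ M ga = b 6 ∧ M (a 1) = b 0 ∧ M (a 2) = b 1 ∧ M (a 3) = b 2 ∧
       M (a 4) = b 3 ∧ M (a 5) = b 4 ∧ M (a 6) = b 5)
    (r : ℕ) (hr : 2 ≤ r) (ρ : ℕ → V)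
    (hρinj : Set.InjOn ρ (Set.Iio r))
    (hebc : ∀ i < r, pref (ρ i) (M (ρ ((i + 1) % r))) (M (ρ i))) :
    ((∃ i < r, ∃ z : Fin 7, ρ i = a z) → ∃ i < r, ρ i = ga) ∧
    ((∃ i < r, ∃ z : Fin 7, ρ i = b z) → ∃ i < r, ρ i = be) := by
  obtain ⟨hM0, hMga, hM1, hM2, hM3, hM4, hM5, hM6⟩ := hN2
  have Mbe : M be = a 0 := by rw [← hM0, hinv]
  have Mb6 : M (b 6) = ga := by rw [← hMga, hinv]
  have Mb0 : M (b 0) = a 1 := by rw [← hM1, hinv]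
  have Mb1 : M (b 1) = a 2 := by rw [← hM2, hinv]
  have Mb2 : M (b 2) = a 3 := by rw [← hM3, hinv]
  have Mb3 : M (b 3) = a 4 := by rw [← hM4, hinv]
  have Mb4 : M (b 4) = a 5 := by rw [← hM5, hinv]
  have Mb5 : M (b 5) = a 6 := by rw [← hM6, hinv]
  simp only [List.nodup_cons, List.mem_cons, List.not_mem_nil, or_false, not_or,
    List.nodup_nil, and_true] at hnd
  obtain ⟨hA0, hA1, hA2, hA3, hA4, hA5, hA6, hB0, hB1, hB2, hB3, hB4, hB5, hB6, -⟩ := hnd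
  have nb31 : b 3 ≠ b 1 := Ne.symm hB1.2.1
  have nb23 : b 2 ≠ b 3 := hB2.1
  have nb21 : b 2 ≠ b 1 := Ne.symm hB1.1
  have nb43 : b 4 ≠ b 3 := Ne.symm hB3.1
  have nb54 : b 5 ≠ b 4 := Ne.symm hB4.1
  have nb53 : b 5 ≠ b 3 := Ne.symm hB3.2.1
  have nb64 : b 6 ≠ b 4 := Ne.symm hB4.2.1
  have nb56 : b 5 ≠ b 6 := hB5.1
  have na02 : a 0 ≠ a 2 := hA0.2.1
  have na10 : a 1 ≠ a 0 := Ne.symm hA0.1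
  have na12 : a 1 ≠ a 2 := hA1.1
  have na23 : a 2 ≠ a 3 := hA2.1
  have na13 : a 1 ≠ a 3 := hA1.2.1
  have na35 : a 3 ≠ a 5 := hA3.2.1
  have na43 : a 4 ≠ a 3 := Ne.symm hA3.1
  have na45 : a 4 ≠ a 5 := hA4.1
  -- helper lemmas about preferences over explicit lists
  have key3 : ∀ x t m o p : V, prefListSG acc pref x [t, m, o] → pref x p m →
      t ≠ m → o ≠ t → o ≠ m → p = t := by
    intro x t m o p hx hp ht ho1 ho2
    rw [hx.2] at hp
    obtain ⟨h1, -, h3⟩ := hp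
    simp only [List.mem_cons, List.not_mem_nil, or_false] at h1
    rcases h1 with rfl | rfl | rfl
    · rfl
    · exact absurd h3 (lt_irrefl _)
    · rw [List.idxOf_cons_ne _ ho1.symm, List.idxOf_cons_ne _ ho2.symm,
        List.idxOf_cons_self, List.idxOf_cons_ne _ ht, List.idxOf_cons_self] at h3
      omega
  have key2 : ∀ x t m p : V, prefListSG acc pref x [t, m] → pref x p m → p = t := by
    intro x t m p hx hp
    rw [hx.2] at hp
    obtain ⟨h1, -, h3⟩ := hp
    simp only [List.mem_cons, List.not_mem_nil, or_false] at h1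
    rcases h1 with rfl | rfl
    · rfl
    · exact absurd h3 (lt_irrefl _)
  have keytop : ∀ (x t : V) (l : List V) (p : V), prefListSG acc pref x (t :: l) →
      pref x p t → False := by
    intro x t l p hx hp
    rw [hx.2] at hp
    obtain ⟨-, -, h3⟩ := hp
    rw [List.idxOf_cons_self] at h3
    exact absurd h3 (Nat.not_lt_zero _)
  have hnext : ∀ i : ℕ, (i + 1) % r < r := fun i => Nat.mod_lt _ (by omega)
  -- A-side chain toward γ
  have ch5 : ∀ i < r, ρ i = a 5 → ∃ j < r, ρ j = ga := by
    intro i hi hv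
    have hp := hebc i hi
    rw [hv, hM5] at hp
    have hx := key3 (a 5) (b 6) (b 4) (b 5) _ ha5 hp nb64 nb56 nb54
    refine ⟨(i + 1) % r, hnext i, ?_⟩
    have := congrArg M hx
    rwa [hinv, Mb6] at this
  have ch4 : ∀ i < r, ρ i = a 4 → ∃ j < r, ρ j = ga := by
    intro i hi hv
    have hp := hebc i hi
    rw [hv, hM4] at hp
    have hx := key3 (a 4) (b 4) (b 3) (b 5) _ ha4 hp nb43 nb54 nb53
    have hn : ρ ((i + 1) % r) = a 5 := by
      have := congrArg M hx; rwa [hinv, Mb4] at this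
    exact ch5 _ (hnext i) hn
  have ch2 : ∀ i < r, ρ i = a 2 → ∃ j < r, ρ j = ga := by
    intro i hi hv
    have hp := hebc i hi
    rw [hv, hM2] at hp
    have hx := key3 (a 2) (b 3) (b 1) (b 2) _ ha2 hp nb31 nb23 nb21
    have hn : ρ ((i + 1) % r) = a 4 := by
      have := congrArg M hx; rwa [hinv, Mb3] at this
    exact ch4 _ (hnext i) hn
  have ch0 : ∀ i < r, ρ i = a 0 → ∃ j < r, ρ j = ga := by
    intro i hi hv
    have hp := hebc i hi
    rw [hv, hM0] at hp
    have hx := key2 (a 0) (b 1) be _ ha0 hp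
    have hn : ρ ((i + 1) % r) = a 2 := by
      have := congrArg M hx; rwa [hinv, Mb1] at this
    exact ch2 _ (hnext i) hn
  have dead1 : ∀ i < r, ρ i = a 1 → False := by
    intro i hi hv
    have hp := hebc i hi
    rw [hv, hM1] at hp
    exact keytop (a 1) (b 0) _ _ ha1 hp
  have dead3 : ∀ i < r, ρ i = a 3 → False := by
    intro i hi hv
    have hp := hebc i hi
    rw [hv, hM3] at hp
    exact keytop (a 3) (b 2) _ _ ha3 hp
  have dead6 : ∀ i < r, ρ i = a 6 → False := by
    intro i hi hv
    have hp := hebc i hi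
    rw [hv, hM6] at hp
    exact keytop (a 6) (b 5) _ _ ha6 hp
  -- B-side chain toward β
  have cb1 : ∀ i < r, ρ i = b 1 → ∃ j < r, ρ j = be := by
    intro i hi hv
    have hp := hebc i hi
    rw [hv, Mb1] at hp
    have hx := key3 (b 1) (a 0) (a 2) (a 1) _ hb1 hp na02 na10 na12
    refine ⟨(i + 1) % r, hnext i, ?_⟩
    have := congrArg M hx
    rwa [hinv, hM0] at this
  have cb2 : ∀ i < r, ρ i = b 2 → ∃ j < r, ρ j = be := by
    intro i hi hv
    have hp := hebc i hi
    rw [hv, Mb2] at hp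
    have hx := key3 (b 2) (a 2) (a 3) (a 1) _ hb2 hp na23 na12 na13
    have hn : ρ ((i + 1) % r) = b 1 := by
      have := congrArg M hx; rwa [hinv, hM2] at this
    exact cb1 _ (hnext i) hn
  have cb4 : ∀ i < r, ρ i = b 4 → ∃ j < r, ρ j = be := by
    intro i hi hv
    have hp := hebc i hi
    rw [hv, Mb4] at hp
    have hx := key3 (b 4) (a 3) (a 5) (a 4) _ hb4 hp na35 na43 na45
    have hn : ρ ((i + 1) % r) = b 2 := by
      have := congrArg M hx; rwa [hinv, hM3] at this
    exact cb2 _ (hnext i) hn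
  have cb6 : ∀ i < r, ρ i = b 6 → ∃ j < r, ρ j = be := by
    intro i hi hv
    have hp := hebc i hi
    rw [hv, Mb6] at hp
    have hx := key2 (b 6) (a 5) ga _ hb6 hp
    have hn : ρ ((i + 1) % r) = b 4 := by
      have := congrArg M hx; rwa [hinv, hM5] at this
    exact cb4 _ (hnext i) hn
  have deadb0 : ∀ i < r, ρ i = b 0 → False := by
    intro i hi hv
    have hp := hebc i hi
    rw [hv, Mb0] at hp
    exact keytop (b 0) (a 1) _ _ hb0 hp
  have deadb3 : ∀ i < r, ρ i = b 3 → False := by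
    intro i hi hv
    have hp := hebc i hi
    rw [hv, Mb3] at hp
    exact keytop (b 3) (a 4) _ _ hb3 hp
  have deadb5 : ∀ i < r, ρ i = b 5 → False := by
    intro i hi hv
    have hp := hebc i hi
    rw [hv, Mb5] at hp
    exact keytop (b 5) (a 6) _ _ hb5 hp
  constructor
  · rintro ⟨i, hi, z, hz⟩
    fin_cases z
    · exact ch0 i hi hz
    · exact (dead1 i hi hz).elim
    · exact ch2 i hi hz
    · exact (dead3 i hi hz).elim
    · exact ch4 i hi hz
    · exact ch5 i hi hz
    · exact (dead6 i hi hz).elim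
  · rintro ⟨i, hi, z, hz⟩
    fin_cases z
    · exact (deadb0 i hi hz).elim
    · exact cb1 i hi hz
    · exact cb2 i hi hz
    · exact (deadb3 i hi hz).elim
    · exact cb4 i hi hz
    · exact (deadb5 i hi hz).elim
    · exact cb6 i hi hz
end

section
/- In the switch gadget, if a perfect matching M contains N^D = {{α,b^0},{a^0,β},{a^6,δ},{γ,b^6},{a^1,b^2},{a^2,b^1},{a^3,b^3},{a^4,b^5},{a^5,b^4}}, then every exchange-blocking coalition of M that involves some agent from A = {a^0,...,a^6} also involves α or γ, and every exchange-blocking coalition involving some agent from B = {b^0,...,b^6} also involves β or δ. -/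
private lemma twoLast {V : Type*} [DecidableEq V] {p q c : V} (hqp : q ≠ p)
    (hc : c ∈ [p, q]) (hlt : [p, q].idxOf c < [p, q].idxOf q) : c = p := by
  have h1 : [p, q].idxOf q = 1 := by
    rw [List.idxOf_cons_ne _ hqp.symm, List.idxOf_cons_self]
  simp at hc
  rcases hc with rfl | rfl
  · rfl
  · omega

private lemma threeMid {V : Type*} [DecidableEq V] {p q s c : V} (hqp : q ≠ p)
    (hsp : s ≠ p) (hsq : s ≠ q)
    (hc : c ∈ [p, q, s]) (hlt : [p, q, s].idxOf c < [p, q, s].idxOf q) : c = p := by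
  have h1 : [p, q, s].idxOf q = 1 := by
    rw [List.idxOf_cons_ne _ hqp.symm, List.idxOf_cons_self]
  simp at hc
  rcases hc with rfl | rfl | rfl
  · rfl
  · omega
  · rw [h1, List.idxOf_cons_ne _ hsp.symm, List.idxOf_cons_ne _ hsq.symm,
      List.idxOf_cons_self] at hlt
    omega

private lemma threeLast {V : Type*} [DecidableEq V] {p q s c : V}
    (hsp : s ≠ p) (hsq : s ≠ q)
    (hc : c ∈ [p, q, s]) (hlt : [p, q, s].idxOf c < [p, q, s].idxOf s) :
    c = p ∨ c = q := by
  have h1 : [p, q, s].idxOf s = 2 := by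
    rw [List.idxOf_cons_ne _ hsp.symm, List.idxOf_cons_ne _ hsq.symm,
      List.idxOf_cons_self]
  simp at hc
  rcases hc with rfl | rfl | rfl
  · exact Or.inl rfl
  · exact Or.inr rfl
  · omega

/-- if a perfect matching M contains N^D, every exchange-blocking coalition of M involving an agent from A also involves α or γ, and every one involving an agent from B also involves β or δ. -/
theorem stmt_11 {V : Type*} [DecidableEq V]
    (acc : V → V → Prop) (pref : V → V → V → Prop)
    (a b : Fin 7 → V) (al be ga de : V)
    (hnd : ([a 0, a 1, a 2, a 3, a 4, a 5, a 6, b 0, b 1, b 2, b 3, b 4, b 5, b 6,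
             al, be, ga, de] : List V).Nodup)
    (haccSym : ∀ p q, acc p q → acc q p)
    (ha0 : prefListSG acc pref (a 0) [b 1, be])
    (ha1 : prefListSG acc pref (a 1) [b 0, b 2, b 1])
    (ha2 : prefListSG acc pref (a 2) [b 3, b 1, b 2])
    (ha3 : prefListSG acc pref (a 3) [b 2, b 3, b 4])
    (ha4 : prefListSG acc pref (a 4) [b 4, b 3, b 5])
    (ha5 : prefListSG acc pref (a 5) [b 6, b 4, b 5])
    (ha6 : prefListSG acc pref (a 6) [b 5, de])
    (hb0 : prefListSG acc pref (b 0) [a 1, al])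
    (hb1 : prefListSG acc pref (b 1) [a 0, a 2, a 1])
    (hb2 : prefListSG acc pref (b 2) [a 2, a 3, a 1])
    (hb3 : prefListSG acc pref (b 3) [a 4, a 3, a 2])
    (hb4 : prefListSG acc pref (b 4) [a 3, a 5, a 4])
    (hb5 : prefListSG acc pref (b 5) [a 6, a 4, a 5])
    (hb6 : prefListSG acc pref (b 6) [a 5, ga])
    (M : V → V)
    (hinv : ∀ v, M (M v) = v)
    (hperf : ∀ v, M v ≠ v)
    (hMacc : ∀ v, acc v (M v))
    (hND : M al = b 0 ∧ M (a 0) = be ∧ M (a 6) = de ∧ M ga = b 6 ∧ M (a 1) = b 2 ∧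
       M (a 2) = b 1 ∧ M (a 3) = b 3 ∧ M (a 4) = b 5 ∧ M (a 5) = b 4)
    (r : ℕ) (hr : 2 ≤ r) (ρ : ℕ → V)
    (hρinj : Set.InjOn ρ (Set.Iio r))
    (hebc : ∀ i < r, pref (ρ i) (M (ρ ((i + 1) % r))) (M (ρ i))) :
    ((∃ i < r, ∃ z : Fin 7, ρ i = a z) → ∃ i < r, ρ i = al ∨ ρ i = ga) ∧
    ((∃ i < r, ∃ z : Fin 7, ρ i = b z) → ∃ i < r, ρ i = be ∨ ρ i = de) := by
  simp only [List.nodup_cons, List.mem_cons, not_or, List.not_mem_nil,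
    not_false_eq_true, and_true, List.nodup_nil] at hnd
  have ne_a0_a1 : a 0 ≠ a 1 := hnd.1.1
  have ne_a0_a2 : a 0 ≠ a 2 := hnd.1.2.1
  have ne_a1_a2 : a 1 ≠ a 2 := hnd.2.1.1
  have ne_a1_a3 : a 1 ≠ a 3 := hnd.2.1.2.1
  have ne_a2_a3 : a 2 ≠ a 3 := hnd.2.2.1.1
  have ne_a2_a4 : a 2 ≠ a 4 := hnd.2.2.1.2.1
  have ne_a3_a4 : a 3 ≠ a 4 := hnd.2.2.2.1.1
  have ne_a3_a5 : a 3 ≠ a 5 := hnd.2.2.2.1.2.1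
  have ne_a4_a5 : a 4 ≠ a 5 := hnd.2.2.2.2.1.1
  have ne_a4_a6 : a 4 ≠ a 6 := hnd.2.2.2.2.1.2.1
  have ne_a5_a6 : a 5 ≠ a 6 := hnd.2.2.2.2.2.1.1
  have ne_a1_al : a 1 ≠ al := hnd.2.1.2.2.2.2.2.2.2.2.2.2.2.2.1
  have ne_a5_ga : a 5 ≠ ga := hnd.2.2.2.2.2.1.2.2.2.2.2.2.2.2.2.2.1
  have ne_b0_b1 : b 0 ≠ b 1 := hnd.2.2.2.2.2.2.2.1.1
  have ne_b0_b2 : b 0 ≠ b 2 := hnd.2.2.2.2.2.2.2.1.2.1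
  have ne_b1_b2 : b 1 ≠ b 2 := hnd.2.2.2.2.2.2.2.2.1.1
  have ne_b1_b3 : b 1 ≠ b 3 := hnd.2.2.2.2.2.2.2.2.1.2.1
  have ne_b2_b3 : b 2 ≠ b 3 := hnd.2.2.2.2.2.2.2.2.2.1.1
  have ne_b2_b4 : b 2 ≠ b 4 := hnd.2.2.2.2.2.2.2.2.2.1.2.1
  have ne_b3_b4 : b 3 ≠ b 4 := hnd.2.2.2.2.2.2.2.2.2.2.1.1
  have ne_b3_b5 : b 3 ≠ b 5 := hnd.2.2.2.2.2.2.2.2.2.2.1.2.1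
  have ne_b4_b5 : b 4 ≠ b 5 := hnd.2.2.2.2.2.2.2.2.2.2.2.1.1
  have ne_b4_b6 : b 4 ≠ b 6 := hnd.2.2.2.2.2.2.2.2.2.2.2.1.2.1
  have ne_b5_b6 : b 5 ≠ b 6 := hnd.2.2.2.2.2.2.2.2.2.2.2.2.1.1
  have ne_b1_be : b 1 ≠ be := hnd.2.2.2.2.2.2.2.2.1.2.2.2.2.2.2.1
  have ne_b5_de : b 5 ≠ de := hnd.2.2.2.2.2.2.2.2.2.2.2.2.1.2.2.2.2

  obtain ⟨hMal, hMa0, hMa6, hMga, hMa1, hMa2, hMa3, hMa4, hMa5⟩ := hND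
  have hMb0 : M (b 0) = al := by have h := hinv al; rw [hMal] at h; exact h
  have hMbe : M be = a 0 := by have h := hinv (a 0); rw [hMa0] at h; exact h
  have hMde : M de = a 6 := by have h := hinv (a 6); rw [hMa6] at h; exact h
  have hMb6 : M (b 6) = ga := by have h := hinv ga; rw [hMga] at h; exact h
  have hMb2 : M (b 2) = a 1 := by have h := hinv (a 1); rw [hMa1] at h; exact h
  have hMb1 : M (b 1) = a 2 := by have h := hinv (a 2); rw [hMa2] at h; exact h
  have hMb3 : M (b 3) = a 3 := by have h := hinv (a 3); rw [hMa3] at h; exact h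
  have hMb5 : M (b 5) = a 4 := by have h := hinv (a 4); rw [hMa4] at h; exact h
  have hMb4 : M (b 4) = a 5 := by have h := hinv (a 5); rw [hMa5] at h; exact h
  have hm : ∀ j : ℕ, (j + 1) % r < r := fun j => Nat.mod_lt _ (by omega)
  have st_a0 : ∀ j, j < r → ρ j = a 0 → ρ ((j + 1) % r) = a 2 := by
    intro j hj hq
    have h := hebc j hj
    rw [hq, hMa0] at h
    obtain ⟨hc, -, hlt⟩ := (ha0.2 _ _).1 h
    have hc' := twoLast ne_b1_be.symm hc hlt
    have h2 := hinv (ρ ((j + 1) % r))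
    rw [hc', hMb1] at h2
    exact h2.symm
  have st_a1 : ∀ j, j < r → ρ j = a 1 → ρ ((j + 1) % r) = al := by
    intro j hj hq
    have h := hebc j hj
    rw [hq, hMa1] at h
    obtain ⟨hc, -, hlt⟩ := (ha1.2 _ _).1 h
    have hc' := threeMid ne_b0_b2.symm ne_b0_b1.symm ne_b1_b2 hc hlt
    have h2 := hinv (ρ ((j + 1) % r))
    rw [hc', hMb0] at h2
    exact h2.symm
  have st_a2 : ∀ j, j < r → ρ j = a 2 → ρ ((j + 1) % r) = a 3 := by
    intro j hj hq
    have h := hebc j hj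
    rw [hq, hMa2] at h
    obtain ⟨hc, -, hlt⟩ := (ha2.2 _ _).1 h
    have hc' := threeMid ne_b1_b3 ne_b2_b3 ne_b1_b2.symm hc hlt
    have h2 := hinv (ρ ((j + 1) % r))
    rw [hc', hMb3] at h2
    exact h2.symm
  have st_a3 : ∀ j, j < r → ρ j = a 3 → ρ ((j + 1) % r) = a 1 := by
    intro j hj hq
    have h := hebc j hj
    rw [hq, hMa3] at h
    obtain ⟨hc, -, hlt⟩ := (ha3.2 _ _).1 h
    have hc' := threeMid ne_b2_b3.symm ne_b2_b4.symm ne_b3_b4.symm hc hlt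
    have h2 := hinv (ρ ((j + 1) % r))
    rw [hc', hMb2] at h2
    exact h2.symm
  have st_a4 : ∀ j, j < r → ρ j = a 4 → ρ ((j + 1) % r) = a 5 ∨ ρ ((j + 1) % r) = a 3 := by
    intro j hj hq
    have h := hebc j hj
    rw [hq, hMa4] at h
    obtain ⟨hc, -, hlt⟩ := (ha4.2 _ _).1 h
    have hc' := threeLast ne_b4_b5.symm ne_b3_b5.symm hc hlt
    have h2 := hinv (ρ ((j + 1) % r))
    rcases hc' with hc' | hc'
    · left; rw [hc', hMb4] at h2; exact h2.symm
    · right; rw [hc', hMb3] at h2; exact h2.symm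
  have st_a5 : ∀ j, j < r → ρ j = a 5 → ρ ((j + 1) % r) = ga := by
    intro j hj hq
    have h := hebc j hj
    rw [hq, hMa5] at h
    obtain ⟨hc, -, hlt⟩ := (ha5.2 _ _).1 h
    have hc' := threeMid ne_b4_b6 ne_b5_b6 ne_b4_b5.symm hc hlt
    have h2 := hinv (ρ ((j + 1) % r))
    rw [hc', hMb6] at h2
    exact h2.symm
  have st_a6 : ∀ j, j < r → ρ j = a 6 → ρ ((j + 1) % r) = a 4 := by
    intro j hj hq
    have h := hebc j hj
    rw [hq, hMa6] at h
    obtain ⟨hc, -, hlt⟩ := (ha6.2 _ _).1 h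
    have hc' := twoLast ne_b5_de.symm hc hlt
    have h2 := hinv (ρ ((j + 1) % r))
    rw [hc', hMb5] at h2
    exact h2.symm
  have st_b0 : ∀ j, j < r → ρ j = b 0 → ρ ((j + 1) % r) = b 2 := by
    intro j hj hq
    have h := hebc j hj
    rw [hq, hMb0] at h
    obtain ⟨hc, -, hlt⟩ := (hb0.2 _ _).1 h
    have hc' := twoLast ne_a1_al.symm hc hlt
    have h2 := hinv (ρ ((j + 1) % r))
    rw [hc', hMa1] at h2
    exact h2.symm
  have st_b1 : ∀ j, j < r → ρ j = b 1 → ρ ((j + 1) % r) = be := by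
    intro j hj hq
    have h := hebc j hj
    rw [hq, hMb1] at h
    obtain ⟨hc, -, hlt⟩ := (hb1.2 _ _).1 h
    have hc' := threeMid ne_a0_a2.symm ne_a0_a1.symm ne_a1_a2 hc hlt
    have h2 := hinv (ρ ((j + 1) % r))
    rw [hc', hMa0] at h2
    exact h2.symm
  have st_b2 : ∀ j, j < r → ρ j = b 2 → ρ ((j + 1) % r) = b 1 ∨ ρ ((j + 1) % r) = b 3 := by
    intro j hj hq
    have h := hebc j hj
    rw [hq, hMb2] at h
    obtain ⟨hc, -, hlt⟩ := (hb2.2 _ _).1 h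
    have hc' := threeLast ne_a1_a2 ne_a1_a3 hc hlt
    have h2 := hinv (ρ ((j + 1) % r))
    rcases hc' with hc' | hc'
    · left; rw [hc', hMa2] at h2; exact h2.symm
    · right; rw [hc', hMa3] at h2; exact h2.symm
  have st_b3 : ∀ j, j < r → ρ j = b 3 → ρ ((j + 1) % r) = b 5 := by
    intro j hj hq
    have h := hebc j hj
    rw [hq, hMb3] at h
    obtain ⟨hc, -, hlt⟩ := (hb3.2 _ _).1 h
    have hc' := threeMid ne_a3_a4 ne_a2_a4 ne_a2_a3 hc hlt
    have h2 := hinv (ρ ((j + 1) % r))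
    rw [hc', hMa4] at h2
    exact h2.symm
  have st_b4 : ∀ j, j < r → ρ j = b 4 → ρ ((j + 1) % r) = b 3 := by
    intro j hj hq
    have h := hebc j hj
    rw [hq, hMb4] at h
    obtain ⟨hc, -, hlt⟩ := (hb4.2 _ _).1 h
    have hc' := threeMid ne_a3_a5.symm ne_a3_a4.symm ne_a4_a5 hc hlt
    have h2 := hinv (ρ ((j + 1) % r))
    rw [hc', hMa3] at h2
    exact h2.symm
  have st_b5 : ∀ j, j < r → ρ j = b 5 → ρ ((j + 1) % r) = de := by
    intro j hj hq
    have h := hebc j hj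
    rw [hq, hMb5] at h
    obtain ⟨hc, -, hlt⟩ := (hb5.2 _ _).1 h
    have hc' := threeMid ne_a4_a6 ne_a5_a6 ne_a4_a5.symm hc hlt
    have h2 := hinv (ρ ((j + 1) % r))
    rw [hc', hMa6] at h2
    exact h2.symm
  have st_b6 : ∀ j, j < r → ρ j = b 6 → ρ ((j + 1) % r) = b 4 := by
    intro j hj hq
    have h := hebc j hj
    rw [hq, hMb6] at h
    obtain ⟨hc, -, hlt⟩ := (hb6.2 _ _).1 h
    have hc' := twoLast ne_a5_ga.symm hc hlt
    have h2 := hinv (ρ ((j + 1) % r))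
    rw [hc', hMa5] at h2
    exact h2.symm
  constructor
  · rintro ⟨i, hi, z, hz⟩
    by_contra hno
    push_neg at hno
    have K1 : ∀ j, j < r → ρ j = a 1 → False :=
      fun j hj h => (hno _ (hm j)).1 (st_a1 j hj h)
    have K5 : ∀ j, j < r → ρ j = a 5 → False :=
      fun j hj h => (hno _ (hm j)).2 (st_a5 j hj h)
    have K3 : ∀ j, j < r → ρ j = a 3 → False :=
      fun j hj h => K1 _ (hm j) (st_a3 j hj h)
    have K2 : ∀ j, j < r → ρ j = a 2 → False :=
      fun j hj h => K3 _ (hm j) (st_a2 j hj h)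
    have K0 : ∀ j, j < r → ρ j = a 0 → False :=
      fun j hj h => K2 _ (hm j) (st_a0 j hj h)
    have K4 : ∀ j, j < r → ρ j = a 4 → False := by
      intro j hj h
      rcases st_a4 j hj h with h' | h'
      · exact K5 _ (hm j) h'
      · exact K3 _ (hm j) h'
    have K6 : ∀ j, j < r → ρ j = a 6 → False :=
      fun j hj h => K4 _ (hm j) (st_a6 j hj h)
    rcases z with ⟨zv, hzv⟩
    interval_cases zv
    · exact K0 i hi hz
    · exact K1 i hi hz
    · exact K2 i hi hz
    · exact K3 i hi hz
    · exact K4 i hi hz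
    · exact K5 i hi hz
    · exact K6 i hi hz
  · rintro ⟨i, hi, z, hz⟩
    by_contra hno
    push_neg at hno
    have K1 : ∀ j, j < r → ρ j = b 1 → False :=
      fun j hj h => (hno _ (hm j)).1 (st_b1 j hj h)
    have K5 : ∀ j, j < r → ρ j = b 5 → False :=
      fun j hj h => (hno _ (hm j)).2 (st_b5 j hj h)
    have K3 : ∀ j, j < r → ρ j = b 3 → False :=
      fun j hj h => K5 _ (hm j) (st_b3 j hj h)
    have K4 : ∀ j, j < r → ρ j = b 4 → False :=
      fun j hj h => K3 _ (hm j) (st_b4 j hj h)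
    have K6 : ∀ j, j < r → ρ j = b 6 → False :=
      fun j hj h => K4 _ (hm j) (st_b6 j hj h)
    have K2 : ∀ j, j < r → ρ j = b 2 → False := by
      intro j hj h
      rcases st_b2 j hj h with h' | h'
      · exact K1 _ (hm j) h'
      · exact K3 _ (hm j) h'
    have K0 : ∀ j, j < r → ρ j = b 0 → False :=
      fun j hj h => K2 _ (hm j) (st_b0 j hj h)
    rcases z with ⟨zv, hzv⟩
    interval_cases zv
    · exact K0 i hi hz
    · exact K1 i hi hz
    · exact K2 i hi hz
    · exact K3 i hi hz
    · exact K4 i hi hz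
    · exact K5 i hi hz
    · exact K6 i hi hz
end

section
/- Six categories of perfect matchings relative to an hourglass: let H be a height-h hourglass in the acceptability graph G(P) of a profile with preference lists of length at most three, with layers (u_i, w_i) for 0 ≤ i ≤ h-1. Then every perfect matching M of P falls into exactly one of six categories according to which of the four corner agents u_0, w_0, u_{h-1}, w_{h-1} are matched askew: (I) exactly u_0 and w_{h-1} askew; (II) exactly w_0 and u_{h-1} askew; (III) exactly u_0 and w_0 askew; (IV) exactly u_{h-1} and w_{h-1} askew; (V) all four askew; (VI) none askew; and in each case all other agents of H are matched straight. -/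
/-- The vertex set of an hourglass with layers `(u i, w i)`, `i < h`. -/
def hgSet {V : Type*} (h : ℕ) (u w : ℕ → V) : Set V :=
  {v | ∃ i < h, v = u i ∨ v = w i}

/-- `IsHourglass G h u w`: the vertices `u 0, w 0, …, u (h-1), w (h-1)` induce an
hourglass of height `h` in `G`: consecutive layers are completely cross-linked,
each layer is linked horizontally, and middle-layer vertices have exactly these
three neighbours inside the hourglass (corner vertices have degree at least two
inside, which is implied). -/
def IsHourglass {V : Type*} (G : SimpleGraph V) (h : ℕ) (u w : ℕ → V) : Prop :=
  2 ≤ h ∧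
  Set.InjOn u (Set.Iio h) ∧ Set.InjOn w (Set.Iio h) ∧
  (∀ i < h, ∀ j < h, u i ≠ w j) ∧
  (∀ i < h, G.Adj (u i) (w i)) ∧
  (∀ i, i + 1 < h → G.Adj (u i) (w (i + 1)) ∧ G.Adj (u (i + 1)) (w i)) ∧
  (∀ i, 1 ≤ i → i + 1 < h →
    (∀ j < h, G.Adj (u i) (w j) → j + 1 = i ∨ j = i ∨ j = i + 1) ∧
    (∀ j < h, ¬ G.Adj (u i) (u j)) ∧
    (∀ j < h, G.Adj (w i) (u j) → j + 1 = i ∨ j = i ∨ j = i + 1) ∧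
    (∀ j < h, ¬ G.Adj (w i) (w j)))

/-- A maximal hourglass: no strictly larger vertex set induces an hourglass. -/
def IsMaxHourglass {V : Type*} (G : SimpleGraph V) (h : ℕ) (u w : ℕ → V) : Prop :=
  IsHourglass G h u w ∧
    ¬ ∃ (h' : ℕ) (u' w' : ℕ → V), IsHourglass G h' u' w' ∧
        hgSet h u w ⊂ hgSet h' u' w'

/-- `u i` is matched straight by `M` (partner is `w j` with `|j - i| ≤ 1`,
`j` within the layer range). -/
def StraightU {V : Type*} (h : ℕ) (u w : ℕ → V) (M : V → V) (i : ℕ) : Prop :=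
  M (u i) = w i ∨ (i + 1 < h ∧ M (u i) = w (i + 1)) ∨ (1 ≤ i ∧ M (u i) = w (i - 1))

/-- `w i` is matched straight by `M`. -/
def StraightW {V : Type*} (h : ℕ) (u w : ℕ → V) (M : V → V) (i : ℕ) : Prop :=
  M (w i) = u i ∨ (i + 1 < h ∧ M (w i) = u (i + 1)) ∨ (1 ≤ i ∧ M (w i) = u (i - 1))


open scoped Classical in
/-- The index of the straight partner of `u i`. -/
noncomputable def pIdx {V : Type*} (h : ℕ) (u w : ℕ → V) (M : V → V) (i : ℕ) : ℕ :=
  if M (u i) = w i then i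
  else if i + 1 < h ∧ M (u i) = w (i + 1) then i + 1
  else i - 1

lemma pIdx_spec {V : Type*} {h : ℕ} {u w : ℕ → V} {M : V → V}
    (hw : Set.InjOn w (Set.Iio h)) (hinv : ∀ v, M (M v) = v)
    {i : ℕ} (hi : i < h) (hs : StraightU h u w M i) :
    pIdx h u w M i < h ∧ M (u i) = w (pIdx h u w M i) ∧
      StraightU h w u M (pIdx h u w M i) := by
  classical
  unfold pIdx
  split_ifs with h1 h2
  · refine ⟨hi, h1, Or.inl ?_⟩
    rw [← h1, hinv]
  · refine ⟨h2.1, h2.2, Or.inr (Or.inr ⟨by omega, ?_⟩)⟩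
    simp only [Nat.add_sub_cancel]
    rw [← h2.2, hinv]
  · rcases hs with h1' | h2' | ⟨h3a, h3b⟩
    · exact absurd h1' h1
    · exact absurd h2' h2
    · refine ⟨by omega, h3b, Or.inr (Or.inl ⟨by omega, ?_⟩)⟩
      rw [Nat.sub_add_cancel h3a, ← h3b, hinv]

lemma straight_index {V : Type*} {h : ℕ} {u w : ℕ → V} {M : V → V}
    (hw : Set.InjOn w (Set.Iio h)) {i j : ℕ} (hi : i < h) (hj : j < h)
    (hM : M (u i) = w j) (hs : StraightU h u w M i) :
    j = i ∨ j = i + 1 ∨ j + 1 = i := by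
  rcases hs with h1 | ⟨hlt, h2⟩ | ⟨hge, h3⟩
  · left
    exact hw (Set.mem_Iio.mpr hj) (Set.mem_Iio.mpr hi) (hM.symm.trans h1)
  · right; left
    exact hw (Set.mem_Iio.mpr hj) (Set.mem_Iio.mpr hlt) (hM.symm.trans h2)
  · right; right
    have := hw (Set.mem_Iio.mpr hj) (Set.mem_Iio.mpr (by omega : i - 1 < h))
      (hM.symm.trans h3)
    omega

lemma pIdx_eq {V : Type*} {h : ℕ} {u w : ℕ → V} {M : V → V}
    (hw : Set.InjOn w (Set.Iio h)) {i j : ℕ} (hi : i < h) (hj : j < h)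
    (hM : M (u i) = w j) (hc : j = i ∨ j = i + 1 ∨ j + 1 = i) :
    pIdx h u w M i = j := by
  classical
  unfold pIdx
  split_ifs with h1 h2
  · exact (hw (Set.mem_Iio.mpr hj) (Set.mem_Iio.mpr hi) (hM.symm.trans h1)).symm
  · exact (hw (Set.mem_Iio.mpr hj) (Set.mem_Iio.mpr h2.1) (hM.symm.trans h2.2)).symm
  · rcases hc with rfl | rfl | hc3
    · exact absurd hM h1
    · exact absurd ⟨hj, hM⟩ h2
    · omega

lemma middle_straightU {V : Type*} [Fintype V] {G : SimpleGraph V} [DecidableRel G.Adj]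
    (hdeg : ∀ v : V, G.degree v ≤ 3) {h : ℕ} {u w : ℕ → V}
    (hw : Set.InjOn w (Set.Iio h))
    (hlayer : ∀ i < h, G.Adj (u i) (w i))
    (hcross : ∀ i, i + 1 < h → G.Adj (u i) (w (i + 1)) ∧ G.Adj (u (i + 1)) (w i))
    {M : V → V} (hMadj : ∀ v, G.Adj v (M v))
    {i : ℕ} (h1 : 1 ≤ i) (h2 : i + 1 < h) : StraightU h u w M i := by
  classical
  have ha : G.Adj (u i) (w (i - 1)) := by
    have := (hcross (i - 1) (by omega)).2
    rwa [Nat.sub_add_cancel h1] at this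
  have hb : G.Adj (u i) (w i) := hlayer i (by omega)
  have hc : G.Adj (u i) (w (i + 1)) := (hcross i h2).1
  have hsub : ({w (i - 1), w i, w (i + 1)} : Finset V) ⊆ G.neighborFinset (u i) := by
    intro x hx
    simp only [Finset.mem_insert, Finset.mem_singleton] at hx
    rcases hx with rfl | rfl | rfl <;>
      simp [SimpleGraph.mem_neighborFinset, ha, hb, hc]
  have hd1 : w (i - 1) ≠ w i := fun e => by
    have := hw (Set.mem_Iio.mpr (by omega : i - 1 < h)) (Set.mem_Iio.mpr (by omega : i < h)) e
    omega
  have hd2 : w (i - 1) ≠ w (i + 1) := fun e => by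
    have := hw (Set.mem_Iio.mpr (by omega : i - 1 < h)) (Set.mem_Iio.mpr h2) e
    omega
  have hd3 : w i ≠ w (i + 1) := fun e => by
    have := hw (Set.mem_Iio.mpr (by omega : i < h)) (Set.mem_Iio.mpr h2) e
    omega
  have hcard : ({w (i - 1), w i, w (i + 1)} : Finset V).card = 3 := by
    rw [Finset.card_insert_of_notMem (by simp [hd1, hd2]),
      Finset.card_insert_of_notMem (by simp [hd3]), Finset.card_singleton]
  have heq : ({w (i - 1), w i, w (i + 1)} : Finset V) = G.neighborFinset (u i) := by
    apply Finset.eq_of_subset_of_card_le hsub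
    rw [hcard]
    have := hdeg (u i)
    rwa [← SimpleGraph.card_neighborFinset_eq_degree] at this
  have hmem : M (u i) ∈ G.neighborFinset (u i) :=
    (SimpleGraph.mem_neighborFinset _ _ _).mpr (hMadj (u i))
  rw [← heq] at hmem
  simp only [Finset.mem_insert, Finset.mem_singleton] at hmem
  rcases hmem with hm | hm | hm
  · exact Or.inr (Or.inr ⟨h1, hm⟩)
  · exact Or.inl hm
  · exact Or.inr (Or.inl ⟨h2, hm⟩)

set_option maxHeartbeats 1600000 in
/-- every perfect matching of a profile whose acceptability graph
has maximum degree three matches all middle-layer agents of an hourglass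
straight, and falls into exactly one of six categories according to which of the
four corner agents are matched askew: (I) exactly `u 0` and `w (h-1)`;
(II) exactly `w 0` and `u (h-1)`; (III) exactly `u 0` and `w 0`;
(IV) exactly `u (h-1)` and `w (h-1)`; (V) all four; (VI) none. -/
theorem stmt_12 {V : Type*} [Fintype V] (G : SimpleGraph V) [DecidableRel G.Adj]
    (hdeg : ∀ v : V, G.degree v ≤ 3)
    (h : ℕ) (u w : ℕ → V) (hH : IsHourglass G h u w)
    (M : V → V)
    (hinv : ∀ v, M (M v) = v)
    (hperf : ∀ v, M v ≠ v)
    (hMadj : ∀ v, G.Adj v (M v)) :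
    (∀ i, 1 ≤ i → i + 1 < h → StraightU h u w M i ∧ StraightW h u w M i) ∧
    ((¬ StraightU h u w M 0 ∧ ¬ StraightW h u w M (h - 1) ∧
        StraightW h u w M 0 ∧ StraightU h u w M (h - 1)) ∨
     (¬ StraightW h u w M 0 ∧ ¬ StraightU h u w M (h - 1) ∧
        StraightU h u w M 0 ∧ StraightW h u w M (h - 1)) ∨
     (¬ StraightU h u w M 0 ∧ ¬ StraightW h u w M 0 ∧
        StraightU h u w M (h - 1) ∧ StraightW h u w M (h - 1)) ∨
     (¬ StraightU h u w M (h - 1) ∧ ¬ StraightW h u w M (h - 1) ∧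
        StraightU h u w M 0 ∧ StraightW h u w M 0) ∨
     (¬ StraightU h u w M 0 ∧ ¬ StraightW h u w M 0 ∧
        ¬ StraightU h u w M (h - 1) ∧ ¬ StraightW h u w M (h - 1)) ∨
     (StraightU h u w M 0 ∧ StraightW h u w M 0 ∧
        StraightU h u w M (h - 1) ∧ StraightW h u w M (h - 1))) := by
  classical
  obtain ⟨hh2, hu, hw, huw, hlayer, hcross, hmid⟩ := hH
  have hmU : ∀ i, 1 ≤ i → i + 1 < h → StraightU h u w M i :=
    fun i h1 h2 => middle_straightU hdeg hw hlayer hcross hMadj h1 h2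
  have hmW : ∀ i, 1 ≤ i → i + 1 < h → StraightW h u w M i :=
    fun i h1 h2 => middle_straightU hdeg hu (fun i hi => (hlayer i hi).symm)
      (fun i hi => ⟨(hcross i hi).2.symm, (hcross i hi).1.symm⟩) hMadj h1 h2
  refine ⟨fun i h1 h2 => ⟨hmU i h1 h2, hmW i h1 h2⟩, ?_⟩
  have hAB : ((Finset.range h).filter (fun i => StraightU h u w M i)).card =
      ((Finset.range h).filter (fun i => StraightW h u w M i)).card := by
    apply Finset.card_bij (fun i _ => pIdx h u w M i)
    · intro a ha
      rw [Finset.mem_filter, Finset.mem_range] at ha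
      obtain ⟨hlt, hM, hs⟩ := pIdx_spec hw hinv ha.1 ha.2
      exact Finset.mem_filter.mpr ⟨Finset.mem_range.mpr hlt, hs⟩
    · intro a1 ha1 a2 ha2 heq
      rw [Finset.mem_filter, Finset.mem_range] at ha1 ha2
      obtain ⟨_, hM1, _⟩ := pIdx_spec hw hinv ha1.1 ha1.2
      obtain ⟨_, hM2, _⟩ := pIdx_spec hw hinv ha2.1 ha2.2
      have : M (u a1) = M (u a2) := by rw [hM1, hM2, heq]
      have hu' : u a1 = u a2 := by
        have := congrArg M this
        rwa [hinv, hinv] at this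
      exact hu (Set.mem_Iio.mpr ha1.1) (Set.mem_Iio.mpr ha2.1) hu'
    · intro j hj
      rw [Finset.mem_filter, Finset.mem_range] at hj
      obtain ⟨hlt, hM, hs⟩ := pIdx_spec hu hinv hj.1 hj.2
      set i := pIdx h w u M j with hidef
      have hMi : M (u i) = w j := by
        have := congrArg M hM
        rw [hinv] at this
        exact this.symm
      refine ⟨i, Finset.mem_filter.mpr ⟨Finset.mem_range.mpr hlt, hs⟩, ?_⟩
      exact pIdx_eq hw hlt hj.1 hMi (straight_index hw hlt hj.1 hMi hs)
  have hNU : (Finset.range h).filter (fun i => ¬ StraightU h u w M i) =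
      ({0, h - 1} : Finset ℕ).filter (fun i => ¬ StraightU h u w M i) := by
    ext x
    simp only [Finset.mem_filter, Finset.mem_range, Finset.mem_insert, Finset.mem_singleton]
    constructor
    · rintro ⟨hx, hnx⟩
      refine ⟨?_, hnx⟩
      by_contra hcon
      push_neg at hcon
      exact hnx (hmU x (by omega) (by omega))
    · rintro ⟨hx, hnx⟩
      exact ⟨by omega, hnx⟩
  have hNW : (Finset.range h).filter (fun i => ¬ StraightW h u w M i) =
      ({0, h - 1} : Finset ℕ).filter (fun i => ¬ StraightW h u w M i) := by
    ext x
    simp only [Finset.mem_filter, Finset.mem_range, Finset.mem_insert, Finset.mem_singleton]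
    constructor
    · rintro ⟨hx, hnx⟩
      refine ⟨?_, hnx⟩
      by_contra hcon
      push_neg at hcon
      exact hnx (hmW x (by omega) (by omega))
    · rintro ⟨hx, hnx⟩
      exact ⟨by omega, hnx⟩
  have hne : (0 : ℕ) ≠ h - 1 := by omega
  have cardtwo : ∀ p : ℕ → Prop, ∀ inst : DecidablePred p,
      (({0, h - 1} : Finset ℕ).filter p).card =
        (if p 0 then 1 else 0) + (if p (h - 1) then 1 else 0) := by
    intro p inst
    rw [show ({0, h - 1} : Finset ℕ) = insert 0 {h - 1} from rfl,
      Finset.filter_insert, Finset.filter_singleton]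
    by_cases p0 : p 0 <;> by_cases p1 : p (h - 1) <;>
      simp [p0, p1, Finset.card_insert_of_notMem, hne]
  have hsplitU := Finset.card_filter_add_card_filter_not
    (s := Finset.range h) (p := fun i => StraightU h u w M i)
  have hsplitW := Finset.card_filter_add_card_filter_not
    (s := Finset.range h) (p := fun i => StraightW h u w M i)
  rw [Finset.card_range] at hsplitU hsplitW
  have e1 : ((Finset.range h).filter (fun i => ¬ StraightU h u w M i)).card =
      (if ¬ StraightU h u w M 0 then 1 else 0) +
      (if ¬ StraightU h u w M (h - 1) then 1 else 0) := by
    rw [hNU]; exact cardtwo _ inferInstance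
  have e2 : ((Finset.range h).filter (fun i => ¬ StraightW h u w M i)).card =
      (if ¬ StraightW h u w M 0 then 1 else 0) +
      (if ¬ StraightW h u w M (h - 1) then 1 else 0) := by
    rw [hNW]; exact cardtwo _ inferInstance
  have hcount : (if ¬ StraightU h u w M 0 then 1 else 0) +
      (if ¬ StraightU h u w M (h - 1) then 1 else 0) =
      (if ¬ StraightW h u w M 0 then 1 else 0) +
      (if ¬ StraightW h u w M (h - 1) then 1 else 0) := by
    rw [← e1, ← e2]
    omega
  by_cases a : StraightU h u w M 0 <;> by_cases b : StraightW h u w M 0 <;>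
    by_cases c : StraightU h u w M (h - 1) <;> by_cases d : StraightW h u w M (h - 1) <;>
    simp only [a, b, c, d, not_true, not_false_iff, if_true, if_false] at hcount <;>
    first
      | omega
      | tauto
end
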